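/- If f: F(T) → ℝ is completely alternating on the nonempty finite subsets of T and nonnegative there, then f satisfies the triangle inequality f(A ∪ B) ≤ f(A ∪ C) + f(C ∪ B) for all nonempty finite subsets A, B, C of T. -/
import Mathlib


/-- `f` is completely alternating on the semigroup of *nonempty* finite subsets of `T`:
all iterated differences `Δ_{K₁} ⋯ Δ_{Kₙ} f (K) ≤ 0` for `n ≥ 1` and nonempty finite
`K, K₁, …, Kₙ`. -/
def CompletelyAlternatingNE {T : Type*} [DecidableEq T] (f : Finset T → ℝ) : Prop :=
  ∀ (n : ℕ), 1 ≤ n → ∀ (K : Finset T), K.Nonempty →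
    ∀ (Ks : Fin n → Finset T), (∀ i, (Ks i).Nonempty) →
      ∑ I : Finset (Fin n), (-1 : ℝ) ^ I.card * f (K ∪ I.sup Ks) ≤ 0

lemma mono_of_CA {T : Type*} [DecidableEq T] (f : Finset T → ℝ)
    (hCA : CompletelyAlternatingNE f) (K L : Finset T) (hK : K.Nonempty) (hL : L.Nonempty) :
    f K ≤ f (K ∪ L) := by
  have h := hCA 1 le_rfl K hK (fun _ => L) (fun _ => hL)
  have huniv : (Finset.univ : Finset (Finset (Fin 1))) = {∅, {0}} := by decide
  rw [huniv, Finset.sum_insert (by decide), Finset.sum_singleton] at h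
  simp at h
  linarith

/-- If `f` is completely alternating on the nonempty finite subsets of `T` and nonnegative
there, then `f` satisfies the triangle inequality
`f(A ∪ B) ≤ f(A ∪ C) + f(C ∪ B)` for all nonempty finite `A, B, C ⊆ T`. -/
theorem triangle_of_completelyAlternating_nonneg {T : Type*} [DecidableEq T]
    (f : Finset T → ℝ) (hCA : CompletelyAlternatingNE f)
    (hnn : ∀ A : Finset T, A.Nonempty → 0 ≤ f A)
    (A B C : Finset T) (hA : A.Nonempty) (hB : B.Nonempty) (hC : C.Nonempty) :
    f (A ∪ B) ≤ f (A ∪ C) + f (C ∪ B) := by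
  have h1 : f (A ∪ B) ≤ f ((A ∪ B) ∪ C) := mono_of_CA f hCA _ _ (hA.mono Finset.subset_union_left) hC
  have h2 := hCA 2 (by norm_num) C hC ![A, B] (by
    intro i; fin_cases i <;> simpa)
  have huniv : (Finset.univ : Finset (Finset (Fin 2))) = {∅, {0}, {1}, {0, 1}} := by decide
  rw [huniv, Finset.sum_insert (by decide), Finset.sum_insert (by decide),
    Finset.sum_insert (by decide), Finset.sum_singleton] at h2
  simp [Matrix.cons_val_zero, Matrix.cons_val_one] at h2
  have e1 : C ∪ A = A ∪ C := Finset.union_comm _ _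
  have e2 : C ∪ (A ∪ B) = A ∪ B ∪ C := Finset.union_comm _ _
  rw [e1, e2] at h2
  linarith [hnn C hC]
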